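/- Very radical revision equals a lexicographic revision by the negation, then a severe antiwithdrawal, then a lexicographic revision: for every total preorder C and formula P, C rad(P) is equivalent to C lex(¬P) sev(P) lex(P). -/

import Mathlib

open Set
open scoped Classical

variable {M : Type*}

namespace BeliefRevision

/-- `minSet C P`: the minimal models of `P` according to the total preorder `C`,
i.e. `C(i) ∩ Mod(P)` for the least `i` making this nonempty. -/
noncomputable def minSet : List (Set M) → Set M → Set M
  | [], _ => ∅
  | X :: rest, P => if (X ∩ P).Nonempty then X ∩ P else minSet rest P

/-- Equivalence of total preorders: same minimal models for every formula. -/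
def equivC (C C' : List (Set M)) : Prop :=
  ∀ P : Set M, minSet C P = minSet C' P

/-- A total preorder: an ordered partition (empty classes allowed) of all models. -/
def IsPartition (C : List (Set M)) : Prop :=
  C.Pairwise Disjoint ∧ C.foldr (· ∪ ·) ∅ = Set.univ

/-- Lexicographic revision. -/
def lex (C : List (Set M)) (L : Set M) : List (Set M) :=
  C.map (· ∩ L) ++ C.map (· \ L)

/-- Refinement. -/
def refi (C : List (Set M)) (R : Set M) : List (Set M) :=
  C.flatMap fun X => [X ∩ R, X \ R]

/-- Natural revision: `[C(i)∩P, C(0),...,C(i-1), C(i)\P, C(i+1),...,C(m)]`. -/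
noncomputable def natr : List (Set M) → Set M → List (Set M)
  | [], _ => []
  | X :: rest, P =>
    if (X ∩ P).Nonempty then (X ∩ P) :: (X \ P) :: rest
    else
      match natr rest P with
      | a :: r => a :: X :: r
      | [] => [X]

/-- Severe antiwithdrawal: merge classes `0..i` where `i` is least with `C(i)∩P ≠ ∅`. -/
noncomputable def sevw : List (Set M) → Set M → List (Set M)
  | [], _ => []
  | X :: rest, P =>
    if (X ∩ P).Nonempty then X :: rest
    else
      match sevw rest P with
      | a :: r => (X ∪ a) :: r
      | [] => [X]

/-- Restrained revision. -/
noncomputable def res : List (Set M) → Set M → List (Set M)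
  | [], _ => []
  | X :: rest, P =>
    if (X ∩ P).Nonempty then
      (X ∩ P) :: (X \ P) :: rest.flatMap (fun Y => [Y ∩ P, Y \ P])
    else
      match res rest P with
      | a :: r => a :: (X ∩ P) :: (X \ P) :: r
      | [] => [X ∩ P, X \ P]

/-- Very radical revision. -/
def rad (C : List (Set M)) (P : Set M) : List (Set M) :=
  C.map (· ∩ P) ++ [C.foldr (· ∪ ·) ∅ \ P]

/-- Severe revision: `[C(i)∩P, (C(0)∪...∪C(i))\P, C(i+1),...,C(m)]`. -/
noncomputable def sevr : List (Set M) → Set M → List (Set M)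
  | [], _ => []
  | X :: rest, P =>
    if (X ∩ P).Nonempty then (X ∩ P) :: (X \ P) :: rest
    else
      match sevr rest P with
      | a :: b :: r => a :: (X ∪ b) :: r
      | l => X :: l

/-- Moderate severe revision. -/
noncomputable def msev (C : List (Set M)) (P : Set M) : List (Set M) :=
  C.map (· ∩ P) ++ (sevw C P).map (· \ P)

/-- Merge `A` with the first nonempty class of the list (helper for `psev`). -/
noncomputable def mergeJ (A : Set M) : List (Set M) → List (Set M)
  | [] => [A]
  | Y :: r => if Y.Nonempty then (A ∪ Y) :: r else mergeJ A r

/-- Plain severe revision: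
`[C(i)∩P, C(0)∪...∪(C(i)\P)∪C(j), C(j+1),...,C(m)]` with `i` least with
`C(i)∩P ≠ ∅` and `j` the least index `> i` with `C(j) ≠ ∅`. -/
noncomputable def psev : List (Set M) → Set M → List (Set M)
  | [], _ => []
  | X :: rest, P =>
    if (X ∩ P).Nonempty then (X ∩ P) :: mergeJ (X \ P) rest
    else
      match psev rest P with
      | a :: b :: r => a :: (X ∪ b) :: r
      | l => X :: l

/-- Full meet revision. -/
noncomputable def full (C : List (Set M)) (P : Set M) : List (Set M) :=
  [minSet C P, Set.univ \ minSet C P]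

/-- `maxset F [F₁,...,Fₖ]`: conjoin each `Fᵢ` in order whenever consistent. -/
noncomputable def maxset : Set M → List (Set M) → Set M
  | F, [] => F
  | F, L :: rest => maxset (if (F ∩ L).Nonempty then F ∩ L else F) rest

/-- The underformula `under(S; Lₙ,...,L₁)`. -/
noncomputable def under : Set M → List (Set M) → Set M
  | _, [] => Set.univ
  | S, L :: rest =>
    if (S ∩ L).Nonempty then L ∩ under (S ∩ L) rest else L ∪ under S rest

/-- `upTo C S = C(0) ∪ ... ∪ C(i)` where `i` is least with `C(i)∩S ≠ ∅`. -/
noncomputable def upTo : List (Set M) → Set M → Set M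
  | [], _ => ∅
  | X :: rest, S => if (X ∩ S).Nonempty then X else X ∪ upTo rest S

noncomputable def longestAux : Set M → List (Set M) → Set M
  | A, [] => A
  | A, L :: rest => if (A ∩ L).Nonempty then longestAux (A ∩ L) rest else A

/-- Longest consistent conjunction of a sequence of formulas. -/
noncomputable def longest : List (Set M) → Set M
  | [] => Set.univ
  | L :: rest => longestAux L rest

/-- `rev` is a bottom-refining revision on `(C,P)`: it is a revision
(`min(C rev(P),⊤) = min(C,P)`) and, whenever `C(0)∩Mod(P) ≠ ∅`, class zero of
the result is `C(0)∩Mod(P)` and class one is `C(0)\Mod(P)`. -/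
noncomputable def BottomRefining (rev : List (Set M) → Set M → List (Set M))
    (C : List (Set M)) (P : Set M) : Prop :=
  minSet (rev C P) Set.univ = minSet C P ∧
  ((C.getD 0 ∅ ∩ P).Nonempty →
    (rev C P).getD 0 ∅ = C.getD 0 ∅ ∩ P ∧
    (rev C P).getD 1 ∅ = C.getD 0 ∅ \ P)

lemma foldr_union_append (A B : List (Set M)) :
    (A ++ B).foldr (· ∪ ·) ∅ = A.foldr (· ∪ ·) ∅ ∪ B.foldr (· ∪ ·) ∅ := by
  induction A with
  | nil => simp
  | cons X A ih => simp [ih, Set.union_assoc]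

lemma foldr_union_map_inter (L : List (Set M)) (P : Set M) :
    (L.map (· ∩ P)).foldr (· ∪ ·) ∅ = L.foldr (· ∪ ·) ∅ ∩ P := by
  induction L with
  | nil => simp
  | cons X L ih => simp [ih, Set.union_inter_distrib_right]

lemma foldr_union_map_diff (L : List (Set M)) (P : Set M) :
    (L.map (· \ P)).foldr (· ∪ ·) ∅ = L.foldr (· ∪ ·) ∅ \ P := by
  induction L with
  | nil => simp
  | cons X L ih => simp [ih, Set.union_diff_distrib]

lemma minSet_append (A B : List (Set M)) (Q : Set M) :
    minSet (A ++ B) Q =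
      if (A.foldr (· ∪ ·) ∅ ∩ Q).Nonempty then minSet A Q else minSet B Q := by
  induction A with
  | nil => simp [minSet]
  | cons X A ih =>
    simp only [List.cons_append, minSet, List.foldr_cons,
      Set.union_inter_distrib_right, Set.union_nonempty, ih]
    by_cases h1 : (X ∩ Q).Nonempty <;>
      by_cases h2 : (A.foldr (· ∪ ·) ∅ ∩ Q).Nonempty <;> simp [h1, h2, ih]

lemma sevw_ne_nil (L : List (Set M)) (P : Set M) (h : L ≠ []) : sevw L P ≠ [] := by
  induction L with
  | nil => exact absurd rfl h
  | cons X rest ih =>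
    rw [sevw]
    split
    · simp
    · cases hr : sevw rest P <;> simp

lemma sevw_foldr_union (L : List (Set M)) (P : Set M) :
    (sevw L P).foldr (· ∪ ·) ∅ = L.foldr (· ∪ ·) ∅ := by
  induction L with
  | nil => rfl
  | cons X rest ih =>
    rw [sevw]
    split
    · rfl
    · cases hr : sevw rest P with
      | nil =>
        have : rest = [] := by
          by_contra hne
          exact sevw_ne_nil rest P hne hr
        subst this
        simp
      | cons a r =>
        have h' := ih
        rw [hr] at h'
        simp only [List.foldr_cons] at h' ⊢
        show (X ∪ a) ∪ r.foldr (· ∪ ·) ∅ = X ∪ rest.foldr (· ∪ ·) ∅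
        rw [Set.union_assoc, h']

lemma sevw_subset (L : List (Set M)) (P : Set M) (h : ∀ X ∈ L, X ⊆ P) :
    ∀ Y ∈ sevw L P, Y ⊆ P := by
  induction L with
  | nil => simp [sevw]
  | cons X rest ih =>
    rw [sevw]
    have hX := h X (List.mem_cons_self (a := X) (l := rest))
    have hrest : ∀ X ∈ rest, X ⊆ P := fun Y hY => h Y (List.mem_cons_of_mem _ hY)
    split
    · intro Y hY
      rcases List.mem_cons.mp hY with h' | h'
      · exact h' ▸ hX
      · exact hrest Y h'
    · cases hr : sevw rest P with
      | nil => intro Y hY; simp at hY; exact hY ▸ hX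
      | cons a r =>
        intro Y hY
        rcases List.mem_cons.mp hY with h' | h'
        · subst h'
          exact Set.union_subset hX (ih hrest a (hr ▸ List.mem_cons_self (a := a) (l := r)))
        · exact ih hrest Y (hr ▸ List.mem_cons_of_mem _ h')

lemma minSet_sevw (L : List (Set M)) (P Q : Set M) (h : ∀ X ∈ L, X ⊆ P) :
    minSet (sevw L P) Q = minSet L Q := by
  induction L with
  | nil => rfl
  | cons X rest ih =>
    have hX : X ∩ P = X := Set.inter_eq_left.mpr (h X (List.mem_cons_self (a := X) (l := rest)))
    have hrest : ∀ X ∈ rest, X ⊆ P := fun Y hY => h Y (List.mem_cons_of_mem _ hY)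
    rw [sevw]
    split
    · rfl
    · rename_i hne
      rw [hX] at hne
      have hXe : X = ∅ := Set.not_nonempty_iff_eq_empty.mp hne
      subst hXe
      cases hr : sevw rest P with
      | nil =>
        have : rest = [] := by
          by_contra hne'
          exact sevw_ne_nil rest P hne' hr
        subst this
        simp [minSet]
      | cons a r =>
        show minSet ((∅ ∪ a) :: r) Q = minSet (∅ :: rest) Q
        rw [Set.empty_union, ← hr, ih hrest, minSet]
        simp

lemma sevw_append_disj (D E : List (Set M)) (P : Set M)
    (hD : ∀ X ∈ D, X ∩ P = ∅) (hE : E ≠ []) :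
    ∃ a r, sevw E P = a :: r ∧
      sevw (D ++ E) P = (D.foldr (· ∪ ·) ∅ ∪ a) :: r := by
  induction D with
  | nil =>
    obtain ⟨a, r, heq⟩ : ∃ a r, sevw E P = a :: r := by
      cases h : sevw E P with
      | nil => exact absurd h (sevw_ne_nil E P hE)
      | cons a r => exact ⟨a, r, rfl⟩
    refine ⟨a, r, heq, ?_⟩
    simp only [List.nil_append, List.foldr_nil, Set.empty_union]
    exact heq
  | cons X D ih =>
    obtain ⟨a, r, h1, h2⟩ := ih (fun Y hY => hD Y (List.mem_cons_of_mem _ hY))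
    refine ⟨a, r, h1, ?_⟩
    have hX : X ∩ P = ∅ := hD X (List.mem_cons_self (a := X) (l := D))
    show sevw (X :: (D ++ E)) P = _
    rw [sevw]
    rw [if_neg (by simp [hX])]
    rw [h2]
    simp [Set.union_assoc]

lemma minSet_all_empty (L : List (Set M)) (Q : Set M) (h : ∀ X ∈ L, X = ∅) :
    minSet L Q = ∅ := by
  induction L with
  | nil => rfl
  | cons X rest ih =>
    rw [minSet, if_neg, ih (fun Y hY => h Y (List.mem_cons_of_mem _ hY))]
    rw [h X (List.mem_cons_self (a := X) (l := rest))]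
    simp

/-- Very radical revision equals a lexicographic revision by the negation, then
a severe antiwithdrawal, then a lexicographic revision. -/
theorem rad_eq_lex_sevw_lex (C : List (Set M)) (hC : IsPartition C) (P : Set M) :
    equivC (rad C P) (lex (sevw (lex C Pᶜ) P) P) := by
  intro Q
  cases C with
  | nil =>
    simp [rad, lex, sevw, minSet]
  | cons C0 C' =>
    set C : List (Set M) := C0 :: C' with hCdef
    have hCne : C ≠ [] := by simp [hCdef]
    have hU : C.foldr (· ∪ ·) ∅ = Set.univ := hC.2
    set D : List (Set M) := C.map (· \ P) with hD
    set E : List (Set M) := C.map (· ∩ P) with hE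
    -- rewrite lex C Pᶜ
    have hlex : lex C Pᶜ = D ++ E := by
      have h1 : (· ∩ Pᶜ : Set M → Set M) = (· \ P) := by
        funext X; rw [Set.diff_eq]
      have h2 : (· \ Pᶜ : Set M → Set M) = (· ∩ P) := by
        funext X; rw [Set.diff_eq, compl_compl]
      rw [lex, h1, h2]
    have hEne : E ≠ [] := by simp [hE, hCdef]
    have hDdisj : ∀ X ∈ D, X ∩ P = ∅ := by
      intro X hX
      obtain ⟨Y, _, rfl⟩ := List.mem_map.mp hX
      exact Set.diff_inter_self
    obtain ⟨a, r, hsE, hsDE⟩ := sevw_append_disj D E P hDdisj hEne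
    have hbD : D.foldr (· ∪ ·) ∅ = Set.univ \ P := by
      rw [hD, foldr_union_map_diff, hU]
    have hbE : E.foldr (· ∪ ·) ∅ = P := by
      rw [hE, foldr_union_map_inter, hU, Set.univ_inter]
    have hEsub : ∀ X ∈ E, X ⊆ P := by
      intro X hX
      obtain ⟨Y, _, rfl⟩ := List.mem_map.mp hX
      exact Set.inter_subset_right
    have hsub : ∀ Y ∈ a :: r, Y ⊆ P := hsE ▸ sevw_subset E P hEsub
    have ha : a ⊆ P := hsub a (List.mem_cons_self (a := a) (l := r))
    have hr : ∀ Y ∈ r, Y ⊆ P := fun Y hY => hsub Y (List.mem_cons_of_mem _ hY)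
    rw [hlex, hsDE, hbD]
    -- compute the final lex
    have key1 : (Set.univ \ P ∪ a) ∩ P = a := by
      rw [Set.union_inter_distrib_right, Set.diff_inter_self,
        Set.inter_eq_left.mpr ha, Set.empty_union]
    have key2 : (Set.univ \ P ∪ a) \ P = Set.univ \ P := by
      rw [Set.union_diff_distrib, Set.diff_eq_empty.mpr ha, Set.union_empty,
        Set.diff_diff, Set.union_self]
    have hrmap : r.map (· ∩ P) = r := by
      have := List.map_congr_left (l := r) (f := (· ∩ P)) (g := id)
        (fun Y hY => Set.inter_eq_left.mpr (hr Y hY))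
      simpa using this
    have hlex2 : lex ((Set.univ \ P ∪ a) :: r) P
        = (a :: r) ++ ((Set.univ \ P) :: r.map (· \ P)) := by
      rw [lex]
      simp only [List.map_cons, key1, key2, hrmap]
    rw [hlex2, minSet_append]
    have hbar : (a :: r).foldr (· ∪ ·) ∅ = P := by
      rw [← hsE, sevw_foldr_union, hbE]
    rw [hbar]
    -- compute the lhs
    have hrad : rad C P = E ++ [C.foldr (· ∪ ·) ∅ \ P] := rfl
    rw [hrad, minSet_append, hbE, hU]
    by_cases hPQ : (P ∩ Q).Nonempty
    · rw [if_pos hPQ, if_pos hPQ, ← hsE, minSet_sevw E P Q hEsub]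
    · rw [if_neg hPQ, if_neg hPQ]
      have hmap : minSet (r.map (· \ P)) Q = ∅ := by
        apply minSet_all_empty
        intro X hX
        obtain ⟨Y, hY, rfl⟩ := List.mem_map.mp hX
        exact Set.diff_eq_empty.mpr (hr Y hY)
      show minSet [Set.univ \ P] Q = minSet ((Set.univ \ P) :: r.map (· \ P)) Q
      simp only [minSet, hmap]

end BeliefRevision
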